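/- If {g_n} is a normalized tight frame obtained from unit vectors {e_n} via the Kaczmarz algorithm, then dim H = ∑_{n=0}^∞ ‖g_n‖² = Tr(I - UU*), where U is the strictly lower triangular matrix with (I+U)(I+M) = I and M the strictly lower triangular part of the Gram matrix of {e_n}. -/

import Mathlib

open scoped ComplexInnerProductSpace ENNReal

/-- The Kaczmarz algorithm iterates. -/
noncomputable def kacz {H : Type*} [NormedAddCommGroup H] [InnerProductSpace ℂ H]
    (e : ℕ → H) (x : H) : ℕ → H
  | 0 => ⟪e 0, x⟫ • e 0
  | (n+1) => kacz e x n + ⟪e (n+1), x - kacz e x n⟫ • e (n+1)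

section Aux

variable {H : Type*} [NormedAddCommGroup H] [InnerProductSpace ℂ H]

/-- The Kaczmarz iterates expand in terms of the frame coefficients. -/
lemma kacz_eq_sum (e g : ℕ → H) (hg0 : g 0 = e 0)
    (hg : ∀ n, 0 < n → g n = e n - ∑ i ∈ Finset.range n, ⟪e i, e n⟫ • g i)
    (x : H) : ∀ n, kacz e x n = ∑ i ∈ Finset.range (n + 1), ⟪g i, x⟫ • e i := by
  have key : ∀ n, ⟪e (n+1), x - ∑ i ∈ Finset.range (n+1), ⟪g i, x⟫ • e i⟫ = ⟪g (n+1), x⟫ := by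
    intro n
    rw [hg (n+1) (Nat.succ_pos n)]
    rw [inner_sub_right, inner_sum, inner_sub_left, sum_inner]
    congr 1
    refine Finset.sum_congr rfl fun i _ => ?_
    rw [inner_smul_right, inner_smul_left, inner_conj_symm, mul_comm]
  intro n
  induction n with
  | zero => simp [kacz, hg0]
  | succ n ih =>
    rw [Finset.sum_range_succ, show kacz e x (n+1) = kacz e x n
        + ⟪e (n+1), x - kacz e x n⟫ • e (n+1) from rfl, ih, key]

lemma proj_norm_sq (u y : H) (hu : ‖u‖ = 1) :
    ‖y - ⟪u, y⟫ • u‖ ^ 2 = ‖y‖ ^ 2 - ‖⟪u, y⟫‖ ^ 2 := by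
  have h1 : ⟪y, ⟪u, y⟫ • u⟫ = (‖⟪u, y⟫‖ : ℂ) ^ 2 := by
    rw [inner_smul_right, ← inner_conj_symm y u, RCLike.mul_conj]
    norm_cast
  rw [norm_sub_sq (𝕜 := ℂ), h1]
  have h2 : ‖⟪u, y⟫ • u‖ ^ 2 = ‖⟪u, y⟫‖ ^ 2 := by
    rw [norm_smul, hu, mul_one]
  rw [h2]
  have h3 : RCLike.re ((‖⟪u, y⟫‖ : ℂ) ^ 2) = ‖⟪u, y⟫‖ ^ 2 := by
    norm_cast
  rw [h3]; ring

lemma norm_sub_kacz (e g : ℕ → H) (he : ∀ n, ‖e n‖ = 1) (hg0 : g 0 = e 0)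
    (hg : ∀ n, 0 < n → g n = e n - ∑ i ∈ Finset.range n, ⟪e i, e n⟫ • g i)
    (x : H) : ∀ n, ‖x - kacz e x n‖ ^ 2
      = ‖x‖ ^ 2 - ∑ i ∈ Finset.range (n + 1), ‖⟪g i, x⟫‖ ^ 2 := by
  have key : ∀ n, ⟪e (n+1), x - kacz e x n⟫ = ⟪g (n+1), x⟫ := by
    intro n
    rw [kacz_eq_sum e g hg0 hg x n, hg (n+1) (Nat.succ_pos n)]
    rw [inner_sub_right, inner_sum, inner_sub_left, sum_inner]
    congr 1
    refine Finset.sum_congr rfl fun i _ => ?_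
    rw [inner_smul_right, inner_smul_left, inner_conj_symm, mul_comm]
  intro n
  induction n with
  | zero =>
    have : kacz e x 0 = ⟪e 0, x⟫ • e 0 := rfl
    rw [this, Finset.sum_range_one, ← hg0]
    exact proj_norm_sq (g 0) x (by rw [hg0]; exact he 0)
  | succ n ih =>
    have hs : x - kacz e x (n+1) = (x - kacz e x n) - ⟪e (n+1), x - kacz e x n⟫ • e (n+1) := by
      show x - (kacz e x n + ⟪e (n+1), x - kacz e x n⟫ • e (n+1)) = _
      abel
    rw [hs, proj_norm_sq (e (n+1)) (x - kacz e x n) (he (n+1)), ih, key]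
    conv_rhs => rw [Finset.sum_range_succ]
    ring

/-- Parseval identity for the Kaczmarz frame, in `ℝ≥0∞`. -/
lemma parseval_g (e g : ℕ → H) (he : ∀ n, ‖e n‖ = 1)
    (heff : ∀ x : H, Filter.Tendsto (kacz e x) Filter.atTop (nhds x))
    (hg0 : g 0 = e 0)
    (hg : ∀ n, 0 < n → g n = e n - ∑ i ∈ Finset.range n, ⟪e i, e n⟫ • g i)
    (x : H) :
    (∑' n : ℕ, ENNReal.ofReal (‖⟪g n, x⟫‖ ^ 2)) = ENNReal.ofReal (‖x‖ ^ 2) := by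
  have h1 := ENNReal.tendsto_nat_tsum (fun n => ENNReal.ofReal (‖⟪g n, x⟫‖ ^ 2))
  have hreal : Filter.Tendsto (fun n => ∑ i ∈ Finset.range n, ‖⟪g i, x⟫‖ ^ 2)
      Filter.atTop (nhds (‖x‖ ^ 2)) := by
    rw [← Filter.tendsto_add_atTop_iff_nat 1]
    have hnk : Filter.Tendsto (fun n => ‖x - kacz e x n‖ ^ 2) Filter.atTop (nhds 0) := by
      have : Filter.Tendsto (fun n => x - kacz e x n) Filter.atTop (nhds 0) := by
        have := (heff x).const_sub x
        simpa using this
      have hn := this.norm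
      simp only [norm_zero] at hn
      have := hn.pow 2
      simpa using this
    have heq : ∀ n, ∑ i ∈ Finset.range (n + 1), ‖⟪g i, x⟫‖ ^ 2
        = ‖x‖ ^ 2 - ‖x - kacz e x n‖ ^ 2 := by
      intro n
      rw [norm_sub_kacz e g he hg0 hg x n]; ring
    simp only [heq]
    simpa using (tendsto_const_nhds (x := ‖x‖ ^ 2) (f := Filter.atTop)).sub hnk
  have h2 : Filter.Tendsto (fun n => ∑ i ∈ Finset.range n, ENNReal.ofReal (‖⟪g i, x⟫‖ ^ 2))
      Filter.atTop (nhds (ENNReal.ofReal (‖x‖ ^ 2))) := by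
    have := ENNReal.tendsto_ofReal hreal
    convert this using 2 with n
    rw [← ENNReal.ofReal_sum_of_nonneg (fun i _ => sq_nonneg _)]
  exact tendsto_nhds_unique h1 h2

/-- Parseval identity for a Hilbert basis, in `ℝ≥0∞`. -/
lemma parseval_basis {ι : Type*} (b : HilbertBasis ι ℂ H) (y : H) :
    (∑' i : ι, ENNReal.ofReal (‖⟪b i, y⟫‖ ^ 2)) = ENNReal.ofReal (‖y‖ ^ 2) := by
  have h := b.hasSum_inner_mul_inner y y
  have h2 : HasSum (fun i => ‖⟪b i, y⟫‖ ^ 2) (‖y‖ ^ 2) := by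
    have hre := Complex.reCLM.hasSum h
    have hterm : ∀ i : ι, Complex.reCLM (⟪y, b i⟫ * ⟪b i, y⟫) = ‖⟪b i, y⟫‖ ^ 2 := by
      intro i
      rw [← inner_conj_symm y (b i), RCLike.conj_mul]
      norm_cast
    have hyy : Complex.reCLM (⟪y, y⟫ : ℂ) = ‖y‖ ^ 2 := by
      rw [inner_self_eq_norm_sq_to_K]
      norm_cast
    simpa [hterm, hyy, sq] using hre
  rw [← ENNReal.ofReal_tsum_of_nonneg (fun i => sq_nonneg _) h2.summable, h2.tsum_eq]

end Aux


section Gram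

variable {H : Type*} [NormedAddCommGroup H] [InnerProductSpace ℂ H]

lemma norm_g_sq (e g : ℕ → H) (he : ∀ n, ‖e n‖ = 1) (hg0 : g 0 = e 0)
    (hg : ∀ n, 0 < n → g n = e n - ∑ i ∈ Finset.range n, ⟪e i, e n⟫ • g i)
    (M U : ℕ → ℕ → ℂ)
    (hM : ∀ i j, M i j = if j < i then ⟪e j, e i⟫ else 0)
    (hUM : ∀ i j, (∑ k ∈ Finset.range (i + 1),
        (if i = k then 1 else U i k) * (if k = j then 1 else M k j)) =
      if i = j then 1 else 0)
    (n : ℕ) :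
    ‖g n‖ ^ 2 = 1 - ∑ k ∈ Finset.range n, ‖U n k‖ ^ 2 := by
  set A : ℕ → ℕ → ℂ := fun i k => if i = k then 1 else U i k with hA
  set B : ℕ → ℕ → ℂ := fun k i => if k = i then 1 else M k i with hB
  have hUM' : ∀ j, (∑ k ∈ Finset.range (n + 1), A n k * B k j) = if n = j then 1 else 0 :=
    fun j => hUM n j
  -- e in terms of g
  have hBe : ∀ k, e k = ∑ i ∈ Finset.range (k + 1), B k i • g i := by
    intro k
    cases k with
    | zero => simp [hB, hg0]
    | succ m =>
      rw [Finset.sum_range_succ]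
      have h1 : B (m+1) (m+1) = 1 := by simp [hB]
      have h2 : ∀ i ∈ Finset.range (m+1), B (m+1) i • g i = ⟪e i, e (m+1)⟫ • g i := by
        intro i hi
        have hi' := Finset.mem_range.mp hi
        simp [hB, hM, hi', Nat.ne_of_gt hi']
      rw [h1, one_smul, Finset.sum_congr rfl h2]
      rw [hg (m+1) (Nat.succ_pos m)]; abel
  have hBe' : ∀ k, k ≤ n → e k = ∑ i ∈ Finset.range (n + 1), B k i • g i := by
    intro k hk
    rw [hBe k]
    refine Finset.sum_subset ?_ ?_
    · intro i hi
      exact Finset.mem_range.mpr (lt_of_lt_of_le (Finset.mem_range.mp hi) (by omega))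
    · intro i _ hi
      have hik : k < i := by
        have := Finset.mem_range.not.mp hi; omega
      have hB0 : B k i = 0 := by
        simp [hB, hM, Nat.ne_of_lt hik, not_lt_of_gt hik]
      rw [hB0, zero_smul]
  -- g in terms of e
  have hGe : g n = ∑ k ∈ Finset.range (n + 1), A n k • e k := by
    have step1 : ∑ k ∈ Finset.range (n + 1), A n k • e k
        = ∑ k ∈ Finset.range (n + 1), ∑ i ∈ Finset.range (n + 1), (A n k * B k i) • g i := by
      refine Finset.sum_congr rfl fun k hk => ?_
      rw [hBe' k (Nat.lt_succ_iff.mp (Finset.mem_range.mp hk)), Finset.smul_sum]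
      exact Finset.sum_congr rfl fun i _ => by rw [smul_smul]
    rw [step1, Finset.sum_comm]
    have step2 : ∀ i ∈ Finset.range (n + 1),
        ∑ k ∈ Finset.range (n + 1), (A n k * B k i) • g i
        = (if n = i then (1:ℂ) else 0) • g i := by
      intro i _
      rw [← Finset.sum_smul, hUM' i]
    rw [Finset.sum_congr rfl step2]
    simp
  -- the Gram identity
  have hS : ∀ k j, ⟪e k, e j⟫ = B j k + star (M k j) := by
    intro k j
    rcases lt_trichotomy k j with h | h | h
    · simp [hB, hM, h, Nat.ne_of_gt h, not_lt_of_gt h]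
    · subst h
      have h1 : ⟪e k, e k⟫ = (1 : ℂ) := by
        rw [inner_self_eq_norm_sq_to_K, he k]; norm_num
      simp [hB, hM, h1, he]
    · have h1 : B j k = 0 := by simp [hB, hM, Nat.ne_of_lt h, not_lt_of_gt h]
      have h2 : star (M k j) = ⟪e k, e j⟫ := by
        rw [hM k j, if_pos h]
        exact inner_conj_symm (e k) (e j)
      rw [h1, h2, zero_add]
  have key : (⟪g n, g n⟫ : ℂ) = 1 - ∑ j ∈ Finset.range n, (‖U n j‖ : ℂ) ^ 2 := by
    have expand : (⟪g n, g n⟫ : ℂ) = ∑ k ∈ Finset.range (n + 1), ∑ j ∈ Finset.range (n + 1),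
        (star (A n k) * (A n j * B j k) + A n j * star (A n k * M k j)) := by
      nth_rw 1 [hGe]; nth_rw 1 [hGe]
      rw [sum_inner]
      refine Finset.sum_congr rfl fun k _ => ?_
      rw [inner_smul_left, inner_sum, Finset.mul_sum]
      refine Finset.sum_congr rfl fun j _ => ?_
      rw [inner_smul_right, hS k j]
      simp only [star_mul', RCLike.star_def]
      ring
    have hsplit2 : ∑ k ∈ Finset.range (n + 1), ∑ j ∈ Finset.range (n + 1),
        (star (A n k) * (A n j * B j k) + A n j * star (A n k * M k j))
        = (∑ k ∈ Finset.range (n + 1), ∑ j ∈ Finset.range (n + 1),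
            star (A n k) * (A n j * B j k))
          + ∑ k ∈ Finset.range (n + 1), ∑ j ∈ Finset.range (n + 1),
            A n j * star (A n k * M k j) := by
      rw [← Finset.sum_add_distrib]
      exact Finset.sum_congr rfl fun k _ => Finset.sum_add_distrib
    rw [expand, hsplit2]
    have part1 : ∑ k ∈ Finset.range (n + 1), ∑ j ∈ Finset.range (n + 1),
        star (A n k) * (A n j * B j k) = 1 := by
      have h1 : ∀ k ∈ Finset.range (n + 1), ∑ j ∈ Finset.range (n + 1),
          star (A n k) * (A n j * B j k) = star (A n k) * (if n = k then 1 else 0) := by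
        intro k _
        rw [← Finset.mul_sum, hUM' k]
      rw [Finset.sum_congr rfl h1]
      simp [hA]
    have hAM : ∀ j ∈ Finset.range (n + 1),
        ∑ k ∈ Finset.range (n + 1), A n k * M k j = (if n = j then 1 else 0) - A n j := by
      intro j hj
      have hsplit : ∀ k, B k j = (if k = j then (1:ℂ) else 0) + M k j := by
        intro k
        by_cases hkj : k = j
        · subst hkj
          have : M k k = 0 := by simp [hM]
          simp [hB, this]
        · simp [hB, hkj]
      have h2 : ∑ k ∈ Finset.range (n + 1), A n k * B k j
          = (∑ k ∈ Finset.range (n + 1), A n k * (if k = j then (1:ℂ) else 0))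
            + ∑ k ∈ Finset.range (n + 1), A n k * M k j := by
        rw [← Finset.sum_add_distrib]
        refine Finset.sum_congr rfl fun k _ => ?_
        rw [hsplit k, mul_add]
      have h3 : ∑ k ∈ Finset.range (n + 1), A n k * (if k = j then (1:ℂ) else 0) = A n j := by
        rw [Finset.sum_eq_single j]
        · simp
        · intro k _ hk; simp [hk]
        · intro hj'; exact absurd hj hj'
      have h4 := hUM' j
      rw [h2, h3] at h4
      linear_combination h4
    have part2 : ∑ k ∈ Finset.range (n + 1), ∑ j ∈ Finset.range (n + 1),
        A n j * star (A n k * M k j)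
        = - ∑ j ∈ Finset.range n, (‖U n j‖ : ℂ) ^ 2 := by
      rw [Finset.sum_comm]
      have h1 : ∀ j ∈ Finset.range (n + 1), ∑ k ∈ Finset.range (n + 1),
          A n j * star (A n k * M k j)
          = A n j * star ((if n = j then 1 else 0) - A n j) := by
        intro j hj
        rw [← hAM j hj, star_sum, Finset.mul_sum]
      rw [Finset.sum_congr rfl h1, Finset.sum_range_succ]
      have h2 : A n n * star ((if n = n then (1:ℂ) else 0) - A n n) = 0 := by
        simp [hA]
      rw [h2, add_zero]
      rw [← Finset.sum_neg_distrib]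
      refine Finset.sum_congr rfl fun j hj => ?_
      have hj' := Finset.mem_range.mp hj
      have hnj : n ≠ j := Nat.ne_of_gt hj'
      have hAj : A n j = U n j := by simp [hA, hnj]
      rw [hAj, if_neg hnj, zero_sub, star_neg, mul_neg]
      have hUU : U n j * star (U n j) = ((‖U n j‖ : ℂ)) ^ 2 := by
        rw [RCLike.star_def, RCLike.mul_conj]; norm_cast
      rw [hUU]
    rw [part1, part2]
    ring
  have hnorm : (⟪g n, g n⟫ : ℂ) = ((‖g n‖ : ℂ)) ^ 2 := inner_self_eq_norm_sq_to_K (g n)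
  rw [hnorm] at key
  have : ((‖g n‖ ^ 2 : ℝ) : ℂ) = ((1 - ∑ k ∈ Finset.range n, ‖U n k‖ ^ 2 : ℝ) : ℂ) := by
    push_cast
    exact key
  exact_mod_cast this

end Gram


section Card

variable {H : Type*} [NormedAddCommGroup H] [InnerProductSpace ℂ H] [CompleteSpace H]

lemma tsum_one_eq_rank (s : Set H) (b : HilbertBasis s ℂ H) :
    (∑' _ : s, (1 : ℝ≥0∞)) = ((Module.rank ℂ H).toENat : ℝ≥0∞) := by
  rw [ENNReal.tsum_set_one]
  suffices h : s.encard = (Module.rank ℂ H).toENat by rw [h]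
  by_cases hfin : s.Finite
  · haveI := hfin.fintype
    have hli : LinearIndependent ℂ (⇑b) := b.orthonormal.linearIndependent
    have hsp : ⊤ ≤ Submodule.span ℂ (Set.range ⇑b) := by
      have hd : (Submodule.span ℂ (Set.range ⇑b)).topologicalClosure = ⊤ := b.dense_span
      haveI : FiniteDimensional ℂ (Submodule.span ℂ (Set.range ⇑b)) :=
        FiniteDimensional.span_of_finite ℂ (Set.finite_range _)
      have hcl : IsClosed ((Submodule.span ℂ (Set.range ⇑b)) : Set H) :=
        Submodule.closed_of_finiteDimensional _
      rw [hcl.submodule_topologicalClosure_eq] at hd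
      exact hd.ge
    have hr : Cardinal.mk s = Module.rank ℂ H := Module.Basis.mk_eq_rank'' (Module.Basis.mk hli hsp)
    rw [← hr]
    rfl
  · have h1 : s.encard = ⊤ := Set.Infinite.encard_eq hfin
    have h2 : (Module.rank ℂ H).toENat = ⊤ := by
      rw [Cardinal.toENat_eq_top]
      have hli : LinearIndependent ℂ (⇑b) := b.orthonormal.linearIndependent
      refine le_trans ?_ hli.cardinal_le_rank
      haveI : Infinite s := Set.infinite_coe_iff.mpr hfin
      exact Cardinal.aleph0_le_mk s
    rw [h1, h2]

end Card

theorem dim_eq_sum_norm_sq_eq_trace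
    {H : Type*} [NormedAddCommGroup H] [InnerProductSpace ℂ H] [CompleteSpace H]
    (e g : ℕ → H) (he : ∀ n, ‖e n‖ = 1)
    -- `e` is effective, so `g` is a normalized tight frame:
    (heff : ∀ x : H, Filter.Tendsto (kacz e x) Filter.atTop (nhds x))
    (hg0 : g 0 = e 0)
    (hg : ∀ n, 0 < n → g n = e n - ∑ i ∈ Finset.range n, ⟪e i, e n⟫ • g i)
    (M U : ℕ → ℕ → ℂ)
    (hM : ∀ i j, M i j = if j < i then ⟪e j, e i⟫ else 0)
    (hUtri : ∀ i j, i ≤ j → U i j = 0)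
    (hUM : ∀ i j, (∑ k ∈ Finset.range (i + 1),
        (if i = k then 1 else U i k) * (if k = j then 1 else M k j)) =
      if i = j then 1 else 0) :
    -- `dim H = ∑ ‖g_n‖² = Tr(I - UU*)` (as extended nonnegative reals).
    (∑' n : ℕ, ENNReal.ofReal (‖g n‖ ^ 2)) = ((Module.rank ℂ H).toENat : ℝ≥0∞) ∧
    (∑' n : ℕ, ENNReal.ofReal (1 - ∑ k ∈ Finset.range n, ‖U n k‖ ^ 2)) =
      ((Module.rank ℂ H).toENat : ℝ≥0∞) := by
  obtain ⟨s, b, -⟩ := exists_hilbertBasis (𝕜 := ℂ) (E := H)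
  have key : (∑' n : ℕ, ENNReal.ofReal (‖g n‖ ^ 2)) = ∑' _ : s, (1 : ℝ≥0∞) := by
    calc (∑' n : ℕ, ENNReal.ofReal (‖g n‖ ^ 2))
        = ∑' n : ℕ, ∑' i : s, ENNReal.ofReal (‖⟪b i, g n⟫‖ ^ 2) :=
          tsum_congr fun n => (parseval_basis b (g n)).symm
      _ = ∑' i : s, ∑' n : ℕ, ENNReal.ofReal (‖⟪b i, g n⟫‖ ^ 2) := ENNReal.tsum_comm
      _ = ∑' i : s, ∑' n : ℕ, ENNReal.ofReal (‖⟪g n, (b i : H)⟫‖ ^ 2) := by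
          refine tsum_congr fun i => tsum_congr fun n => ?_
          rw [norm_inner_symm]
      _ = ∑' i : s, ENNReal.ofReal (‖(b i : H)‖ ^ 2) :=
          tsum_congr fun i => parseval_g e g he heff hg0 hg (b i)
      _ = ∑' _ : s, (1 : ℝ≥0∞) := by
          refine tsum_congr fun i => ?_
          rw [b.orthonormal.1 i]
          norm_num
  have hcard := tsum_one_eq_rank s b
  constructor
  · rw [key, hcard]
  · have hterm : ∀ n, ENNReal.ofReal (1 - ∑ k ∈ Finset.range n, ‖U n k‖ ^ 2)
        = ENNReal.ofReal (‖g n‖ ^ 2) := fun n => by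
      rw [norm_g_sq e g he hg0 hg M U hM hUM n]
    rw [tsum_congr hterm, key, hcard]
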